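/- Let K be the normal closure of the commutator [a,b] in the Grigorchuk group G. For each k in K, let k̄ be the binary tree automorphism determined recursively by k̄=(k,k̄) (inactive at the root, with section k at vertex 0 and section k̄ at vertex 1). Then every k̄ belongs to the closure of G in Aut(T), and the set K̄={k̄ : k∈K} is a subgroup of the closure of G canonically isomorphic to K whose intersection with G is trivial. -/

import Mathlib

/-!
We model the group `Aut(T)` of automorphisms of the binary rooted tree via portraits:
an automorphism is uniquely determined by the function `List Bool → Bool` recording,
for every vertex `u` (a finite binary word, `false = 0`, `true = 1`), whether the
automorphism is active (i.e. swaps the two subtrees) at `u`.  Under this identification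
`α_u(g) = g u`, the section of `g` at `u` is `fun v => g (u ++ v)`, and the group
operation corresponds to composition of tree automorphisms.
-/

/-- Automorphisms of the binary rooted tree, encoded by their portraits. -/
def AutT : Type := List Bool → Bool

namespace AutT

/-- The section of a tree automorphism at a first-level vertex. -/
def sec (g : AutT) (x : Bool) : AutT := fun u => g (x :: u)

/-- The section of a tree automorphism at an arbitrary vertex `u`. -/
def secAt (g : AutT) (u : List Bool) : AutT := fun v => g (u ++ v)

/-- The activity (decoration of the portrait) of `g` at the vertex `u`:
`α_u(g) = 1` iff `g` is active at `u`. -/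
def alpha (g : AutT) (u : List Bool) : Bool := g u

/-- The action of a tree automorphism on the vertices of the tree. -/
def act : AutT → List Bool → List Bool
  | _, [] => []
  | g, x :: u => (xor (g []) x) :: act (sec g x) u

/-- Auxiliary function defining the product of two tree automorphisms
(`g * h` acts as `g` followed by `h`). -/
def mulAux : List Bool → AutT → AutT → Bool
  | [], g, h => xor (g []) (h [])
  | x :: u, g, h => mulAux u (sec g x) (sec h (xor x (g [])))

instance : Mul AutT := ⟨fun g h u => mulAux u g h⟩

/-- Auxiliary function defining the inverse of a tree automorphism. -/
def invAux : List Bool → AutT → Bool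
  | [], g => g []
  | x :: u, g => invAux u (sec g (xor x (g [])))

instance : One AutT := ⟨fun _ => false⟩
instance : Inv AutT := ⟨fun g u => invAux u g⟩

lemma one_apply (u : List Bool) : (1 : AutT) u = false := rfl

lemma mul_apply_nil (g h : AutT) : (g * h) [] = xor (g []) (h []) := rfl

lemma mul_apply_cons (g h : AutT) (x : Bool) (u : List Bool) :
    (g * h) (x :: u) = (sec g x * sec h (xor x (g []))) u := rfl

lemma sec_mul (g h : AutT) (x : Bool) :
    sec (g * h) x = sec g x * sec h (xor x (g [])) := rfl

lemma sec_one (x : Bool) : sec (1 : AutT) x = 1 := rfl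

lemma inv_apply_nil (g : AutT) : (g⁻¹ : AutT) [] = g [] := rfl

lemma sec_inv (g : AutT) (x : Bool) :
    sec (g⁻¹ : AutT) x = (sec g (xor x (g [])))⁻¹ := rfl

private lemma mul_assoc' (g h k : AutT) : g * h * k = g * (h * k) := by
  funext u
  induction u generalizing g h k with
  | nil => simp [mul_apply_nil, Bool.xor_assoc]
  | cons x u ih =>
      rw [mul_apply_cons, mul_apply_cons, sec_mul, mul_apply_nil, sec_mul, ih,
        Bool.xor_assoc]

private lemma one_mul' (g : AutT) : 1 * g = g := by
  funext u
  induction u generalizing g with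
  | nil => simp [mul_apply_nil, one_apply]
  | cons x u ih => rw [mul_apply_cons, sec_one, one_apply, Bool.xor_false, ih]; rfl

private lemma inv_mul_cancel' (g : AutT) : g⁻¹ * g = 1 := by
  funext u
  induction u generalizing g with
  | nil => simp [mul_apply_nil, inv_apply_nil, one_apply]
  | cons x u ih =>
      rw [mul_apply_cons, inv_apply_nil, sec_inv, ih]; rfl

instance : Group AutT :=
  Group.ofLeftAxioms mul_assoc' one_mul' inv_mul_cancel'

/-- The generator `a = (1,1)σ` of the Grigorchuk group. -/
def genA : AutT := fun u => decide (u = [])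

/-- The generators `b`, `c`, `d` of the Grigorchuk group, defined simultaneously:
`bcdAux 0 = b = (a, c)`, `bcdAux 1 = c = (a, d)`, `bcdAux 2 = d = (1, b)`. -/
def bcdAux : Fin 3 → List Bool → Bool
  | _, [] => false
  | i, false :: u => if i.val = 2 then false else decide (u = [])
  | i, true :: u => bcdAux (i + 1) u

/-- The generator `b = (a, c)` of the Grigorchuk group. -/
def genB : AutT := bcdAux 0

/-- The generator `c = (a, d)` of the Grigorchuk group. -/
def genC : AutT := bcdAux 1

/-- The generator `d = (1, b)` of the Grigorchuk group. -/
def genD : AutT := bcdAux 2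

/-- The Grigorchuk group, as a subgroup of the group of binary rooted tree
automorphisms. -/
def Grigorchuk : Subgroup AutT := Subgroup.closure {genA, genB, genC, genD}

/-- `β_{xy}(g) = α_{xy}(g) + α_{x ȳ 0}(g) + α_{x ȳ 1}(g)` (mod 2). -/
def beta (g : AutT) (x y : Bool) : Bool :=
  xor (g [x, y]) (xor (g [x, !y, false]) (g [x, !y, true]))

end AutT
namespace AutT

/-- The portrait of a tree automorphism, level by level: the vertices at level `n`
are encoded as functions `Fin n → Bool`. -/
def toLevels (g : AutT) : ∀ n : ℕ, (Fin n → Bool) → Bool := fun _ v => g (List.ofFn v)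

lemma toLevels_injective : Function.Injective toLevels := by
  intro g h hgh
  funext u
  have := congrFun (congrFun hgh u.length) u.get
  simpa [toLevels, List.ofFn_get] using this

/-- The natural metric on the group of binary rooted tree automorphisms:
the distance between two distinct automorphisms `g` and `h` is `2⁻ⁿ`, where `n` is the
largest integer such that `g` and `h` agree on all words of length `n` (equivalently,
the first level at which the portraits of `g` and `h` differ). -/
noncomputable instance : MetricSpace AutT :=
  MetricSpace.induced toLevels toLevels_injective
    (PiNat.metricSpace (E := fun n => (Fin n → Bool) → Bool))

end AutT

namespace AutT

open scoped commutatorElement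

/-- Auxiliary function for `bar`. -/
def barAux : List Bool → AutT → Bool
  | [], _ => false
  | false :: u, k => k u
  | true :: u, k => barAux u k

/-- For a tree automorphism `k`, the automorphism `k̄` determined recursively by
`k̄ = (k, k̄)`. -/
def bar (k : AutT) : AutT := fun u => barAux u k

lemma genA_mem : genA ∈ Grigorchuk :=
  Subgroup.subset_closure (Set.mem_insert _ _)

lemma genB_mem : genB ∈ Grigorchuk :=
  Subgroup.subset_closure (Set.mem_insert_of_mem _ (Set.mem_insert _ _))

lemma commAB_mem : ⁅genA, genB⁆ ∈ Grigorchuk :=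
  Grigorchuk.mul_mem (Grigorchuk.mul_mem (Grigorchuk.mul_mem genA_mem genB_mem)
    (Grigorchuk.inv_mem genA_mem)) (Grigorchuk.inv_mem genB_mem)

/-- `K`, the normal closure of the commutator `⁅a, b⁆` in the Grigorchuk group. -/
def K : Subgroup Grigorchuk :=
  Subgroup.normalClosure {(⟨⁅genA, genB⁆, commAB_mem⟩ : Grigorchuk)}

end AutT

open AutT

open scoped commutatorElement

namespace AutT
lemma genA_nil : genA [] = true := rfl
lemma genB_nil : genB [] = false := rfl
lemma genC_nil : genC [] = false := rfl
lemma genD_nil : genD [] = false := rfl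
lemma one_nil : (1 : AutT) [] = false := rfl
lemma sec_genA (x : Bool) : sec genA x = 1 := rfl
lemma sec_genB_false : sec genB false = genA := rfl
lemma sec_genB_true : sec genB true = genC := rfl
lemma sec_genC_false : sec genC false = genA := rfl
lemma sec_genC_true : sec genC true = genD := rfl
lemma sec_genD_false : sec genD false = 1 := rfl
lemma sec_genD_true : sec genD true = genB := rfl
lemma sec_bar_false (k : AutT) : sec (bar k) false = k := rfl
lemma sec_bar_true (k : AutT) : sec (bar k) true = bar k := rfl
lemma bar_nil (k : AutT) : bar k [] = false := rfl
lemma secAt_nil (g : AutT) : secAt g [] = g := rfl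
lemma secAt_cons (g : AutT) (x : Bool) (u : List Bool) :
    secAt g (x :: u) = secAt (sec g x) u := rfl
end AutT
namespace AutT

/-- `bcdAux` as an element of `AutT`. -/
def bcd (i : Fin 3) : AutT := bcdAux i

lemma genB_eq : genB = bcd 0 := rfl
lemma genC_eq : genC = bcd 1 := rfl
lemma genD_eq : genD = bcd 2 := rfl

lemma aa : genA * genA = 1 := by
  funext u
  cases u with
  | nil => rfl
  | cons x v =>
      rw [mul_apply_cons, sec_genA, sec_genA, one_mul, one_apply, one_apply]

lemma bcd_sq : ∀ (u : List Bool) (i : Fin 3), (bcd i * bcd i) u = false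
  | [], _ => rfl
  | (true :: v), i => by
      rw [mul_apply_cons]
      show (bcd (i+1) * bcd (i+1)) v = false
      exact bcd_sq v (i+1)
  | (false :: v), i => by
      rw [mul_apply_cons]
      match i with
      | 0 => show ((genA : AutT) * genA) v = false; rw [aa, one_apply]
      | 1 => show ((genA : AutT) * genA) v = false; rw [aa, one_apply]
      | 2 => show ((1 : AutT) * 1) v = false; rw [one_mul, one_apply]

lemma bb : genB * genB = 1 := funext fun u => bcd_sq u 0
lemma cc : genC * genC = 1 := funext fun u => bcd_sq u 1
lemma dd : genD * genD = 1 := funext fun u => bcd_sq u 2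

lemma bcd_step : ∀ (u : List Bool) (i : Fin 3),
    (bcd i * bcd (i + 1)) u = bcd (i + 2) u
  | [], _ => rfl
  | (true :: v), i => by
      rw [mul_apply_cons]
      show (bcd (i+1) * bcd (i+1+1)) v = bcd (i+2) (true :: v)
      have h2 : bcd (i+2) (true :: v) = bcd (i+2+1) v := rfl
      have h3 : i + 2 + 1 = (i + 1) + 2 := by rw [add_assoc, add_assoc, add_comm (2 : Fin 3) 1]
      have h4 : i + 1 + 1 = (i + 1) + 1 := rfl
      rw [h2, h3, h4]
      exact bcd_step v (i+1)
  | (false :: v), i => by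
      rw [mul_apply_cons]
      match i with
      | 0 => show ((genA : AutT) * genA) v = false; rw [aa, one_apply]
      | 1 => show ((genA : AutT) * 1) v = genA v; rw [mul_one]
      | 2 => show ((1 : AutT) * genA) v = genA v; rw [one_mul]

lemma bc : genB * genC = genD := funext fun u => bcd_step u 0
lemma cd : genC * genD = genB := funext fun u => bcd_step u 1
lemma db : genD * genB = genC := funext fun u => bcd_step u 2

lemma genA_inv : genA⁻¹ = genA := inv_eq_of_mul_eq_one_right aa
lemma genB_inv : genB⁻¹ = genB := inv_eq_of_mul_eq_one_right bb
lemma genC_inv : genC⁻¹ = genC := inv_eq_of_mul_eq_one_right cc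
lemma genD_inv : genD⁻¹ = genD := inv_eq_of_mul_eq_one_right dd

lemma cb : genC * genB = genD := by
  have := congrArg (·⁻¹) bc
  simpa [mul_inv_rev, genB_inv, genC_inv, genD_inv] using this
lemma dc : genD * genC = genB := by
  have := congrArg (·⁻¹) cd
  simpa [mul_inv_rev, genB_inv, genC_inv, genD_inv] using this
lemma bd : genB * genD = genC := by
  have := congrArg (·⁻¹) db
  simpa [mul_inv_rev, genB_inv, genD_inv, genC_inv] using this

end AutT
namespace AutT

/-- The nucleus of the Grigorchuk group. -/
def Nuc : Set AutT := {1, genA, genB, genC, genD}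

lemma sec_one' (x : Bool) : sec (1 : AutT) x = 1 := rfl

lemma sec_mem_Nuc {s : AutT} (hs : s ∈ Nuc) (x : Bool) : sec s x ∈ Nuc := by
  rcases hs with rfl | rfl | rfl | rfl | rfl <;> cases x <;>
    simp [Nuc, sec_one', sec_genA, sec_genB_false, sec_genB_true, sec_genC_false,
      sec_genC_true, sec_genD_false, sec_genD_true]

lemma secAt_mem_Nuc {s : AutT} (hs : s ∈ Nuc) (u : List Bool) : secAt s u ∈ Nuc := by
  induction u generalizing s with
  | nil => exact hs
  | cons x v ih => rw [secAt_cons]; exact ih (sec_mem_Nuc hs x)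

lemma nuc_nil_of_ne {s : AutT} (hs : s ∈ Nuc) (h : s ≠ genA) : s [] = false := by
  rcases hs with rfl | rfl | rfl | rfl | rfl
  · rfl
  · exact absurd rfl h
  · rfl
  · rfl
  · rfl

lemma sec_mul_mem_Nuc {s t : AutT} (hs : s ∈ Nuc) (ht : t ∈ Nuc) (x : Bool) :
    sec (s * t) x ∈ Nuc := by
  rw [sec_mul]
  rcases hs with rfl | rfl | rfl | rfl | rfl <;>
    rcases ht with rfl | rfl | rfl | rfl | rfl <;> cases x <;>
      simp [Nuc, sec_one', sec_genA, sec_genB_false, sec_genB_true, sec_genC_false,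
        sec_genC_true, sec_genD_false, sec_genD_true, one_apply, genA_nil, genB_nil,
        genC_nil, genD_nil, aa, bb, cc, dd, bc, cb, cd, dc, db, bd]

lemma inv_mem_Nuc {s : AutT} (hs : s ∈ Nuc) : s⁻¹ ∈ Nuc := by
  rcases hs with rfl | rfl | rfl | rfl | rfl <;>
    simp [Nuc, inv_one, genA_inv, genB_inv, genC_inv, genD_inv]

lemma secAt_append (g : AutT) (u v : List Bool) :
    secAt g (u ++ v) = secAt (secAt g u) v := by
  funext w
  show g (u ++ v ++ w) = g (u ++ (v ++ w))
  rw [List.append_assoc]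

lemma secAt_mul : ∀ (u : List Bool) (g h : AutT),
    ∃ v : List Bool, v.length = u.length ∧ secAt (g * h) u = secAt g u * secAt h v
  | [], g, h => ⟨[], rfl, rfl⟩
  | (x :: u), g, h => by
      obtain ⟨v, hv, he⟩ := secAt_mul u (sec g x) (sec h (xor x (g [])))
      exact ⟨xor x (g []) :: v, by simp [hv], by
        rw [secAt_cons, sec_mul, he]; rfl⟩

lemma secAt_inv : ∀ (u : List Bool) (g : AutT),
    ∃ v : List Bool, v.length = u.length ∧ secAt g⁻¹ u = (secAt g v)⁻¹
  | [], g => ⟨[], rfl, rfl⟩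
  | (x :: u), g => by
      obtain ⟨v, hv, he⟩ := secAt_inv u (sec g (xor x (g [])))
      exact ⟨xor x (g []) :: v, by simp [hv], by
        rw [secAt_cons, sec_inv, he]; rfl⟩

/-- Contraction: every element of the Grigorchuk group has all sufficiently deep
sections in the nucleus. -/
lemma contract {g : AutT} (hg : g ∈ Grigorchuk) :
    ∃ N : ℕ, ∀ u : List Bool, N ≤ u.length → secAt g u ∈ Nuc := by
  induction hg using Subgroup.closure_induction with
  | mem x hx =>
      refine ⟨0, fun u _ => secAt_mem_Nuc ?_ u⟩
      rcases hx with rfl | rfl | rfl | rfl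
      · exact Set.mem_insert_of_mem _ (Set.mem_insert _ _)
      · exact Set.mem_insert_of_mem _ (Set.mem_insert_of_mem _ (Set.mem_insert _ _))
      · exact Set.mem_insert_of_mem _ (Set.mem_insert_of_mem _
          (Set.mem_insert_of_mem _ (Set.mem_insert _ _)))
      · exact Set.mem_insert_of_mem _ (Set.mem_insert_of_mem _
          (Set.mem_insert_of_mem _ (Set.mem_insert_of_mem _ rfl)))
  | one => exact ⟨0, fun u _ => secAt_mem_Nuc (Set.mem_insert _ _) u⟩
  | mul x y hx hy ihx ihy =>
      obtain ⟨N₁, h₁⟩ := ihx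
      obtain ⟨N₂, h₂⟩ := ihy
      refine ⟨max N₁ N₂ + 1, fun u hu => ?_⟩
      set M := max N₁ N₂ with hM
      have hlen : (u.take M).length = M := by
        rw [List.length_take]
        omega
      have hdrop : u.drop M ≠ [] := by
        have : (u.drop M).length = u.length - M := List.length_drop
        intro h
        rw [h] at this
        simp at this
        omega
      obtain ⟨v, hv, he⟩ := secAt_mul (u.take M) x y
      have hu' : u = u.take M ++ u.drop M := (List.take_append_drop M u).symm
      rw [hu', secAt_append, he]
      obtain ⟨x₀, w, hw⟩ := List.exists_cons_of_ne_nil hdrop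
      rw [hw, secAt_cons]
      refine secAt_mem_Nuc (sec_mul_mem_Nuc ?_ ?_ x₀) w
      · exact h₁ _ (by omega)
      · exact h₂ _ (by rw [hv, hlen]; omega)
  | inv x hx ihx =>
      obtain ⟨N, hN⟩ := ihx
      refine ⟨N, fun u hu => ?_⟩
      obtain ⟨v, hv, he⟩ := secAt_inv u x
      rw [he]
      exact inv_mem_Nuc (hN v (by omega))

end AutT
namespace AutT

lemma bar_mul (g h : AutT) : bar (g * h) = bar g * bar h := by
  funext u
  induction u with
  | nil => rfl
  | cons x v ih =>
      cases x with
      | false => rfl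
      | true =>
          show bar (g * h) v = (sec (bar g) true * sec (bar h) (xor true (bar g []))) v
          rw [sec_bar_true, bar_nil]
          show bar (g * h) v = (bar g * bar h) v
          exact ih

lemma bar_one : bar (1 : AutT) = 1 := by
  funext u
  induction u with
  | nil => rfl
  | cons x v ih =>
      cases x with
      | false => rfl
      | true => exact ih

lemma bar_inj {g h : AutT} (H : bar g = bar h) : g = h := by
  have := congrArg (fun z => sec z false) H
  simpa [sec_bar_false] using this

/-- `bar` as a monoid homomorphism. -/
def barHom : AutT →* AutT := MonoidHom.mk' bar bar_mul

lemma secAt_bar_replicate (k : AutT) : ∀ n : ℕ,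
    secAt (bar k) (List.replicate n true) = bar k
  | 0 => rfl
  | (n + 1) => by
      rw [List.replicate_succ, secAt_cons, sec_bar_true]
      exact secAt_bar_replicate k n

lemma genC_mem : genC ∈ Grigorchuk :=
  Subgroup.subset_closure (Set.mem_insert_of_mem _ (Set.mem_insert_of_mem _
    (Set.mem_insert _ _)))

lemma genD_mem : genD ∈ Grigorchuk :=
  Subgroup.subset_closure (Set.mem_insert_of_mem _ (Set.mem_insert_of_mem _
    (Set.mem_insert_of_mem _ rfl)))

/-- If `bar k` lies in the Grigorchuk group then `k = 1`. -/
lemma bar_eq_one_of_mem {k : AutT} (hk : bar k ∈ Grigorchuk) : bar k = 1 := by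
  obtain ⟨N, hN⟩ := contract hk
  have hbar : bar k ∈ Nuc := by
    have := hN (List.replicate N true) (by simp)
    rwa [secAt_bar_replicate] at this
  rcases hbar with h | h | h | h | h
  · exact h
  · exact absurd (congrArg (fun z => z []) h) (by simp [bar_nil, genA_nil])
  · exfalso
    have h1 : genC = genB := by
      calc genC = sec genB true := rfl
        _ = sec (bar k) true := by rw [h]
        _ = bar k := sec_bar_true k
        _ = genB := h
    exact Bool.noConfusion (show false = true from congrFun h1 [true, false])
  · exfalso
    have h1 : genD = genC := by
      calc genD = sec genC true := rfl
        _ = sec (bar k) true := by rw [h]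
        _ = bar k := sec_bar_true k
        _ = genC := h
    exact Bool.noConfusion (show false = true from congrFun h1 [false])
  · exfalso
    have h1 : genB = genD := by
      calc genB = sec genD true := rfl
        _ = sec (bar k) true := by rw [h]
        _ = bar k := sec_bar_true k
        _ = genD := h
    exact Bool.noConfusion (show true = false from congrFun h1 [false])

end AutT
namespace AutT

lemma aaL (z : AutT) : genA * (genA * z) = z := by rw [← mul_assoc, aa, one_mul]
lemma cdL (z : AutT) : genC * (genD * z) = genB * z := by rw [← mul_assoc, cd]

lemma tA_eq : ⁅genA, genB⁆ = genA * genB * genA * genB := by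
  rw [commutatorElement_def, genA_inv, genB_inv]

lemma tA_nil : (⁅genA, genB⁆ : AutT) [] = false := by
  rw [tA_eq]
  simp [mul_apply_nil, genA_nil, genB_nil]

lemma sec_t_false : sec ⁅genA, genB⁆ false = genC * genA := by
  rw [tA_eq]
  simp [sec_mul, mul_apply_nil, genA_nil, genB_nil, sec_genA, sec_genB_false,
    sec_genB_true]

lemma sec_t_true : sec ⁅genA, genB⁆ true = genA * genC := by
  rw [tA_eq]
  simp [sec_mul, mul_apply_nil, genA_nil, genB_nil, sec_genA, sec_genB_false,
    sec_genB_true]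

/-- The element `w = t ⬝ (c t c⁻¹)` of `K`, satisfying `ψ(w) = (1, t)`. -/
def wA : AutT := ⁅genA, genB⁆ * (genC * ⁅genA, genB⁆ * genC⁻¹)

lemma wA_nil : wA [] = false := by
  simp [wA, mul_apply_nil, inv_apply_nil, tA_nil, genC_nil]

lemma sec_w_false : sec wA false = 1 := by
  rw [wA]
  simp [sec_mul, mul_apply_nil, inv_apply_nil, genC_inv, tA_nil, genC_nil,
    sec_t_false, sec_t_true, sec_genC_false, sec_genC_true, mul_assoc, aa, cc, aaL]

lemma sec_w_true : sec wA true = ⁅genA, genB⁆ := by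
  rw [wA]
  simp only [sec_mul, mul_apply_nil, inv_apply_nil, genC_inv, tA_nil, genC_nil,
    Bool.xor_false, Bool.false_xor, Bool.xor_true, Bool.true_xor, Bool.not_false,
    Bool.not_true, sec_t_false, sec_t_true, sec_genC_false, sec_genC_true,
    one_mul, mul_one, mul_assoc, aaL, cdL, cd, aa, cc]
  rw [tA_eq]
  simp [mul_assoc]

end AutT
namespace AutT

/-- The generator of `K`, as an element of the Grigorchuk group. -/
def tG : Grigorchuk := ⟨⁅genA, genB⁆, commAB_mem⟩

lemma tG_mem_K : tG ∈ K := Subgroup.subset_normalClosure rfl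

/-- `c` as an element of the Grigorchuk group. -/
def cG : Grigorchuk := ⟨genC, genC_mem⟩

/-- `w` as an element of `K`. -/
def wG : Grigorchuk := tG * (cG * tG * cG⁻¹)

lemma wG_mem_K : wG ∈ K :=
  K.mul_mem tG_mem_K (Subgroup.normalClosure_normal.conj_mem _ tG_mem_K cG)

lemma lift' : ∀ {x : AutT}, x ∈ Grigorchuk →
    ∃ gh : Grigorchuk, (gh : AutT) [] = false ∧ sec (gh : AutT) true = x := by
  intro x hx
  induction hx using Subgroup.closure_induction with
  | mem x hx =>
      rcases hx with rfl | rfl | rfl | rfl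
      · refine ⟨⟨genA * genC * genA,
          Grigorchuk.mul_mem (Grigorchuk.mul_mem genA_mem genC_mem) genA_mem⟩, ?_, ?_⟩
        · simp [mul_apply_nil, genA_nil, genC_nil]
        · simp [sec_mul, mul_apply_nil, genA_nil, genC_nil, sec_genA,
            sec_genC_false, sec_genC_true]
      · exact ⟨⟨genD, genD_mem⟩, genD_nil, sec_genD_true⟩
      · exact ⟨⟨genB, genB_mem⟩, genB_nil, sec_genB_true⟩
      · exact ⟨⟨genC, genC_mem⟩, genC_nil, sec_genC_true⟩
  | one => exact ⟨1, rfl, rfl⟩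
  | mul x y hx hy ihx ihy =>
      obtain ⟨gx, hx0, hx1⟩ := ihx
      obtain ⟨gy, hy0, hy1⟩ := ihy
      refine ⟨gx * gy, ?_, ?_⟩
      · show ((gx : AutT) * (gy : AutT)) [] = false
        rw [mul_apply_nil, hx0, hy0]; rfl
      · show sec ((gx : AutT) * (gy : AutT)) true = x * y
        rw [sec_mul, hx0, hx1]
        simp [hy1]
  | inv x hx ihx =>
      obtain ⟨gx, hx0, hx1⟩ := ihx
      refine ⟨gx⁻¹, ?_, ?_⟩
      · show ((gx : AutT)⁻¹) [] = false
        rw [inv_apply_nil, hx0]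
      · show sec ((gx : AutT)⁻¹) true = x⁻¹
        rw [sec_inv, hx0]
        simp [hx1]

lemma lift (g : Grigorchuk) :
    ∃ gh : Grigorchuk, (gh : AutT) [] = false ∧ sec (gh : AutT) true = (g : AutT) :=
  lift' g.2

/-- Elements of `K` stabilize the root. -/
lemma K_nil : ∀ {k : Grigorchuk}, k ∈ K → (k : AutT) [] = false := by
  intro k hk
  have hk' : k ∈ Subgroup.closure (Group.conjugatesOfSet {tG}) := hk
  clear hk
  induction hk' using Subgroup.closure_induction with
  | mem x hx =>
      rw [Group.mem_conjugatesOfSet_iff] at hx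
      obtain ⟨a, ha, hconj⟩ := hx
      rw [Set.mem_singleton_iff] at ha
      subst ha
      rw [isConj_iff] at hconj
      obtain ⟨c, rfl⟩ := hconj
      show ((c : AutT) * (tG : AutT) * (c : AutT)⁻¹) [] = false
      rw [mul_apply_nil, mul_apply_nil, inv_apply_nil]
      have h : (tG : AutT) [] = false := tA_nil
      rw [h]
      simp
  | one => rfl
  | mul x y hx hy ihx ihy =>
      show ((x : AutT) * (y : AutT)) [] = false
      rw [mul_apply_nil, ihx, ihy]; rfl
  | inv x hx ihx =>
      show ((x : AutT)⁻¹) [] = false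
      rw [inv_apply_nil, ihx]

/-- Right half of the branching property: `1 × K ⊆ ψ(K)`. -/
lemma branchR : ∀ {k : Grigorchuk}, k ∈ K →
    ∃ h : Grigorchuk, h ∈ K ∧ (h : AutT) [] = false ∧
      sec (h : AutT) false = 1 ∧ sec (h : AutT) true = (k : AutT) := by
  intro k hk
  have hk' : k ∈ Subgroup.closure (Group.conjugatesOfSet {tG}) := hk
  clear hk
  induction hk' using Subgroup.closure_induction with
  | mem x hx =>
      rw [Group.mem_conjugatesOfSet_iff] at hx
      obtain ⟨a, ha, hconj⟩ := hx
      rw [Set.mem_singleton_iff] at ha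
      subst ha
      rw [isConj_iff] at hconj
      obtain ⟨c, rfl⟩ := hconj
      obtain ⟨gh, hg0, hg1⟩ := lift c
      refine ⟨gh * wG * gh⁻¹, Subgroup.normalClosure_normal.conj_mem _ wG_mem_K gh,
        ?_, ?_, ?_⟩
      · show ((gh : AutT) * wA * (gh : AutT)⁻¹) [] = false
        rw [mul_apply_nil, mul_apply_nil, inv_apply_nil, hg0, wA_nil]; rfl
      · show sec ((gh : AutT) * wA * (gh : AutT)⁻¹) false = 1
        rw [sec_mul, sec_mul, sec_inv, mul_apply_nil, hg0, wA_nil]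
        simp only [Bool.xor_false, Bool.false_xor, hg0, sec_w_false, mul_one]
        exact mul_inv_cancel _
      · show sec ((gh : AutT) * wA * (gh : AutT)⁻¹) true =
          (c : AutT) * (tG : AutT) * (c : AutT)⁻¹
        rw [sec_mul, sec_mul, sec_inv, mul_apply_nil, hg0, wA_nil]
        simp only [Bool.xor_false, Bool.true_xor, Bool.not_false, hg0, sec_w_true, hg1]
        rfl
  | one => exact ⟨1, K.one_mem, rfl, rfl, rfl⟩
  | mul x y hx hy ihx ihy =>
      obtain ⟨h₁, hm₁, h₁0, h₁f, h₁t⟩ := ihx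
      obtain ⟨h₂, hm₂, h₂0, h₂f, h₂t⟩ := ihy
      refine ⟨h₁ * h₂, K.mul_mem hm₁ hm₂, ?_, ?_, ?_⟩
      · show ((h₁ : AutT) * (h₂ : AutT)) [] = false
        rw [mul_apply_nil, h₁0, h₂0]; rfl
      · show sec ((h₁ : AutT) * (h₂ : AutT)) false = 1
        rw [sec_mul, h₁0]
        simp [h₁f, h₂f]
      · show sec ((h₁ : AutT) * (h₂ : AutT)) true = (x : AutT) * (y : AutT)
        rw [sec_mul, h₁0]
        simp [h₁t, h₂t]
  | inv x hx ihx =>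
      obtain ⟨h₁, hm₁, h₁0, h₁f, h₁t⟩ := ihx
      refine ⟨h₁⁻¹, K.inv_mem hm₁, ?_, ?_, ?_⟩
      · show ((h₁ : AutT)⁻¹) [] = false
        rw [inv_apply_nil, h₁0]
      · show sec ((h₁ : AutT)⁻¹) false = 1
        rw [sec_inv, h₁0]
        simp [h₁f]
      · show sec ((h₁ : AutT)⁻¹) true = (x : AutT)⁻¹
        rw [sec_inv, h₁0]
        simp [h₁t]

/-- Left half of the branching property: `K × 1 ⊆ ψ(K)`. -/
lemma branchL {k : Grigorchuk} (hk : k ∈ K) :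
    ∃ h : Grigorchuk, h ∈ K ∧ (h : AutT) [] = false ∧
      sec (h : AutT) false = (k : AutT) ∧ sec (h : AutT) true = 1 := by
  obtain ⟨h, hm, h0, hf, ht⟩ := branchR hk
  refine ⟨⟨genA, genA_mem⟩ * h * (⟨genA, genA_mem⟩ : Grigorchuk)⁻¹,
    Subgroup.normalClosure_normal.conj_mem _ hm _, ?_, ?_, ?_⟩
  · show (genA * (h : AutT) * genA⁻¹) [] = false
    rw [genA_inv]
    simp [mul_apply_nil, genA_nil, h0]
  · show sec (genA * (h : AutT) * genA⁻¹) false = (k : AutT)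
    rw [genA_inv, sec_mul, sec_mul, mul_apply_nil, genA_nil, h0]
    simp only [Bool.xor_false, Bool.false_xor, sec_genA, one_mul, ht, mul_one]
  · show sec (genA * (h : AutT) * genA⁻¹) true = 1
    rw [genA_inv, sec_mul, sec_mul, mul_apply_nil, genA_nil, h0]
    simp only [Bool.xor_false, Bool.true_xor, Bool.not_true, sec_genA, one_mul, hf,
      mul_one]

/-- The branching property: `K × K ⊆ ψ(K)`. -/
lemma branch {k₁ k₂ : Grigorchuk} (h₁ : k₁ ∈ K) (h₂ : k₂ ∈ K) :
    ∃ h : Grigorchuk, h ∈ K ∧ (h : AutT) [] = false ∧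
      sec (h : AutT) false = (k₁ : AutT) ∧ sec (h : AutT) true = (k₂ : AutT) := by
  obtain ⟨hL, hLm, hL0, hLf, hLt⟩ := branchL h₁
  obtain ⟨hR, hRm, hR0, hRf, hRt⟩ := branchR h₂
  refine ⟨hL * hR, K.mul_mem hLm hRm, ?_, ?_, ?_⟩
  · show ((hL : AutT) * (hR : AutT)) [] = false
    rw [mul_apply_nil, hL0, hR0]; rfl
  · show sec ((hL : AutT) * (hR : AutT)) false = (k₁ : AutT)
    rw [sec_mul, hL0]
    simp [hLf, hRf]
  · show sec ((hL : AutT) * (hR : AutT)) true = (k₂ : AutT)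
    rw [sec_mul, hL0]
    simp [hLt, hRt]

end AutT
namespace AutT

attribute [local instance] PiNat.dist

/-- Finite-level approximation of `bar k` by elements of `K`. -/
lemma approx (n : ℕ) : ∀ {k : Grigorchuk}, k ∈ K →
    ∃ g : Grigorchuk, g ∈ K ∧ ∀ u : List Bool, u.length ≤ n →
      (g : AutT) u = bar (k : AutT) u := by
  induction n with
  | zero =>
      intro k _
      refine ⟨1, K.one_mem, fun u hu => ?_⟩
      have h : u = [] := List.eq_nil_of_length_eq_zero (Nat.le_zero.mp hu)
      subst h
      rfl
  | succ n ih =>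
      intro k hk
      obtain ⟨g, hgK, hg⟩ := ih hk
      obtain ⟨h, hhK, h0, hf, ht⟩ := branch hk hgK
      refine ⟨h, hhK, fun u hu => ?_⟩
      match u with
      | [] => rw [h0]; rfl
      | false :: v =>
          show sec (h : AutT) false v = bar (k : AutT) (false :: v)
          rw [hf]; rfl
      | true :: v =>
          show sec (h : AutT) true v = bar (k : AutT) (true :: v)
          rw [ht]
          have hb : bar (k : AutT) (true :: v) = bar (k : AutT) v := rfl
          rw [hb]
          exact hg v (by
            have : v.length + 1 ≤ n + 1 := by simpa using hu
            omega)

lemma bar_mem_closure {k : Grigorchuk} (hk : k ∈ K) :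
    bar (k : AutT) ∈ closure (Grigorchuk : Set AutT) := by
  rw [Metric.mem_closure_iff]
  intro ε hε
  obtain ⟨n, hn⟩ : ∃ n : ℕ, (1 / 2 : ℝ) ^ n < ε :=
    exists_pow_lt_of_lt_one hε (by norm_num)
  obtain ⟨g, _, hg⟩ := approx n hk
  refine ⟨(g : AutT), g.2, ?_⟩
  have hcyl : toLevels (g : AutT) ∈ PiNat.cylinder (toLevels (bar (k : AutT))) n := by
    rw [PiNat.mem_cylinder_iff]
    intro i hi
    funext v
    exact hg (List.ofFn v) (by simp; omega)
  have hle := PiNat.mem_cylinder_iff_dist_le.mp hcyl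
  calc dist (bar (k : AutT)) (g : AutT)
      = dist (toLevels (g : AutT)) (toLevels (bar (k : AutT))) := dist_comm _ _
    _ ≤ (1 / 2 : ℝ) ^ n := hle
    _ < ε := hn

end AutT

/-- For `K` the normal closure of `⁅a,b⁆` in the Grigorchuk group `G`,
every `k̄` (`k ∈ K`) lies in the closure of `G`; moreover `K̄ = {k̄ : k ∈ K}` is a
subgroup of the closure of `G`, the map `k ↦ k̄` is an injective homomorphism on `K`
(so `K̄` is canonically isomorphic to `K`), and `K̄ ∩ G` is trivial. -/
theorem bar_K_in_closure_grigorchuk :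
    (∀ k : Grigorchuk, k ∈ K → bar (k : AutT) ∈ closure (Grigorchuk : Set AutT)) ∧
    (∃ H : Subgroup AutT,
      (H : Set AutT) = {x : AutT | ∃ k : Grigorchuk, k ∈ K ∧ x = bar (k : AutT)} ∧
      (H : Set AutT) ⊆ closure (Grigorchuk : Set AutT)) ∧
    (∀ k₁ k₂ : Grigorchuk, k₁ ∈ K → k₂ ∈ K →
      bar ((k₁ : AutT) * (k₂ : AutT)) = bar (k₁ : AutT) * bar (k₂ : AutT)) ∧
    (∀ k₁ k₂ : Grigorchuk, k₁ ∈ K → k₂ ∈ K →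
      bar (k₁ : AutT) = bar (k₂ : AutT) → k₁ = k₂) ∧
    {x : AutT | ∃ k : Grigorchuk, k ∈ K ∧ x = bar (k : AutT)} ∩ (Grigorchuk : Set AutT)
      = {1} := by
  have hcar : (((K.map Grigorchuk.subtype).map barHom : Subgroup AutT) : Set AutT) =
      {x : AutT | ∃ k : Grigorchuk, k ∈ K ∧ x = bar (k : AutT)} := by
    ext x
    simp only [SetLike.mem_coe, Subgroup.mem_map, Set.mem_setOf_eq]
    constructor
    · rintro ⟨y, ⟨k, hk, rfl⟩, rfl⟩
      exact ⟨k, hk, rfl⟩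
    · rintro ⟨k, hk, rfl⟩
      exact ⟨(k : AutT), ⟨k, hk, rfl⟩, rfl⟩
  refine ⟨fun k hk => bar_mem_closure hk, ?_, fun k₁ k₂ _ _ => bar_mul _ _,
    fun k₁ k₂ _ _ h => Subtype.ext (bar_inj h), ?_⟩
  · refine ⟨(K.map Grigorchuk.subtype).map barHom, hcar, ?_⟩
    rw [hcar]
    rintro x ⟨k, hk, rfl⟩
    exact bar_mem_closure hk
  · ext x
    simp only [Set.mem_inter_iff, Set.mem_setOf_eq, Set.mem_singleton_iff,
      SetLike.mem_coe]
    constructor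
    · rintro ⟨⟨k, _, rfl⟩, hxG⟩
      exact bar_eq_one_of_mem hxG
    · rintro rfl
      exact ⟨⟨1, K.one_mem, by rw [OneMemClass.coe_one, bar_one]⟩, Grigorchuk.one_mem⟩
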